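/- For every natural number Δ ≥ 1 and every real γ with 0 ≤ γ ≤ Δ, the integral ∫₀^γ (1 − x/Δ)^Δ dx lies in the interval [1 − e^{−γ} − 2/Δ, 1 − e^{−γ}]. -/

import Mathlib

/-- For every natural number Δ ≥ 1 and every real γ with 0 ≤ γ ≤ Δ, the integral
∫₀^γ (1 − x/Δ)^Δ dx lies in the interval [1 − e^{−γ} − 2/Δ, 1 − e^{−γ}]. -/
theorem stmt7 (Δ : ℕ) (hΔ : 1 ≤ Δ) (γ : ℝ) (hγ0 : 0 ≤ γ) (hγΔ : γ ≤ Δ) :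
    (∫ x in (0:ℝ)..γ, (1 - x / (Δ : ℝ)) ^ Δ) ∈
      Set.Icc (1 - Real.exp (-γ) - 2 / (Δ : ℝ)) (1 - Real.exp (-γ)) := by
  have hD : (0:ℝ) < (Δ:ℝ) := by exact_mod_cast hΔ
  set D : ℝ := (Δ:ℝ) with hDdef
  have hD1 : (0:ℝ) < D + 1 := by positivity
  have hcont : Continuous fun x : ℝ => (1 - x / D) ^ Δ := by fun_prop
  have key : (∫ x in (0:ℝ)..γ, (1 - x / D) ^ Δ)
      = D/(D+1) * (1 - (1 - γ/D)^(Δ+1)) := by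
    have h := intervalIntegral.integral_eq_sub_of_hasDerivAt
      (f := fun x => -(D/(D+1)) * (1 - x/D)^(Δ+1))
      (f' := fun x => (1 - x/D)^Δ) (a := 0) (b := γ) ?_
      (hcont.intervalIntegrable 0 γ)
    · rw [h]; simp; ring
    · intro x _
      have h1 : HasDerivAt (fun x : ℝ => 1 - x / D) (-(1/D)) x := by
        simpa using ((hasDerivAt_id x).div_const D).const_sub 1
      have h2 := (h1.pow (Δ+1)).const_mul (-(D/(D+1)))
      convert h2 using 1
      case e'_8 => rfl
      case e'_4 => rfl
      push_cast
      field_simp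
      ring
  constructor
  · -- lower bound
    rw [key]
    have ht0 : 0 ≤ 1 - γ/D := by
      have : γ / D ≤ 1 := by rw [div_le_one hD]; exact hγΔ
      linarith
    have ht : 1 - γ/D ≤ Real.exp (-(γ/D)) := by
      have := Real.add_one_le_exp (-(γ/D)); linarith
    have htp : (1 - γ/D)^(Δ+1) ≤ Real.exp (-γ) := by
      calc (1 - γ/D)^(Δ+1) ≤ (Real.exp (-(γ/D)))^(Δ+1) := by
            exact pow_le_pow_left₀ ht0 ht _
        _ = Real.exp ((Δ+1 : ℕ) * (-(γ/D))) := by rw [← Real.exp_nat_mul]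
        _ ≤ Real.exp (-γ) := by
            apply Real.exp_le_exp.2
            push_cast
            rw [show ((D+1) * (-(γ/D))) = -(γ + γ/D) by field_simp]
            have : 0 ≤ γ / D := by positivity
            linarith
    have hexp_pos : 0 < Real.exp (-γ) := Real.exp_pos _
    have hle1 : Real.exp (-γ) ≤ 1 := by
      rw [Real.exp_le_one_iff]; linarith
    have h1 : D/(D+1) * (1 - Real.exp (-γ)) ≤ D/(D+1) * (1 - (1 - γ/D)^(Δ+1)) := by
      apply mul_le_mul_of_nonneg_left (by linarith) (by positivity)
    have h2 : 1 - Real.exp (-γ) - 2/D ≤ D/(D+1) * (1 - Real.exp (-γ)) := by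
      rw [div_mul_eq_mul_div, le_div_iff₀ hD1]
      have h2D : 2/D * D = 2 := by field_simp
      nlinarith [hexp_pos, hle1, hD, h2D, div_pos (by norm_num : (0:ℝ)<2) hD]
    linarith
  · -- upper bound
    have hmono : (∫ x in (0:ℝ)..γ, (1 - x / D) ^ Δ)
        ≤ ∫ x in (0:ℝ)..γ, Real.exp (-x) := by
      apply intervalIntegral.integral_mono_on hγ0
        (hcont.intervalIntegrable 0 γ)
        ((Real.continuous_exp.comp continuous_neg).intervalIntegrable 0 γ)
      intro x hx
      have hx0 := hx.1
      have hxγ := hx.2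
      have ht0 : 0 ≤ 1 - x/D := by
        have : x / D ≤ 1 := by rw [div_le_one hD]; linarith
        linarith
      have ht : 1 - x/D ≤ Real.exp (-(x/D)) := by
        have := Real.add_one_le_exp (-(x/D)); linarith
      calc (1 - x/D)^Δ ≤ (Real.exp (-(x/D)))^Δ := pow_le_pow_left₀ ht0 ht _
        _ = Real.exp ((Δ : ℕ) * (-(x/D))) := by rw [← Real.exp_nat_mul]
        _ = Real.exp (-x) := by
            congr 1
            rw [hDdef]
            field_simp
    have hexp : (∫ x in (0:ℝ)..γ, Real.exp (-x)) = 1 - Real.exp (-γ) := by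
      rw [intervalIntegral.integral_comp_neg (fun x => Real.exp x),
        integral_exp]
      simp
    linarith [hmono, hexp.symm ▸ hmono]
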